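/- Let E be a finite set with distinct positive times t : E → ℝ, and let f : Set(E) → ℝ be any function with f(∅) = 1, f(E) = 0, and f monotone decreasing for inclusion taking values in {0,1} (an 'up-closed failure indicator': f(A)=1 iff A lacks some property, where the property is monotone). Then the time T at which the increasing process of edges sorted by t first reaches a set A with f(A)=0 satisfies T = Σ_{B ⊆ E} (Σ_{A ⊇ B, f(A)=1} (-1)^{|A−B|}) · min{t(e) : e ∉ B}, where the inner minimum over an empty set is taken as 0 (the term for B = E has zero coefficient). -/

import Mathlib

open Finset

private lemma aux_base {E : Type*} [DecidableEq E] (D : Finset E) :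
    ∑ S ∈ D.powerset, (-1:ℝ) ^ (D.card - S.card) = if D = ∅ then 1 else 0 := by
  have h1 : ∑ S ∈ D.powerset, (-1:ℝ) ^ (D.card - S.card)
      = ∑ S ∈ D.powerset, (-1:ℝ) ^ S.card := by
    refine Finset.sum_nbij' (i := fun S => D \ S) (j := fun S => D \ S) ?_ ?_ ?_ ?_ ?_
    · intro S hS; exact mem_powerset.2 (sdiff_subset)
    · intro S hS; exact mem_powerset.2 (sdiff_subset)
    · intro S hS; exact Finset.sdiff_sdiff_eq_self (mem_powerset.1 hS)
    · intro S hS; exact Finset.sdiff_sdiff_eq_self (mem_powerset.1 hS)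
    · intro S hS; rw [card_sdiff_of_subset (mem_powerset.1 hS)]
  rw [h1]
  have h2 : ((∑ m ∈ D.powerset, (-1 : ℤ) ^ m.card : ℤ) : ℝ)
      = ∑ S ∈ D.powerset, (-1:ℝ) ^ S.card := by push_cast; rfl
  rw [← h2, Finset.sum_powerset_neg_one_pow_card]
  split_ifs <;> norm_num

private lemma aux_ie2 {E : Type*} [DecidableEq E] [Fintype E] (C A : Finset E) :
    ∑ B ∈ (univ : Finset E).powerset.filter (fun B => C ⊆ B ∧ B ⊆ A),
      (-1:ℝ) ^ (A.card - B.card) = if A = C then 1 else 0 := by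
  by_cases hCA : C ⊆ A
  · have h1 : ∑ B ∈ (univ : Finset E).powerset.filter (fun B => C ⊆ B ∧ B ⊆ A),
        (-1:ℝ) ^ (A.card - B.card)
        = ∑ S ∈ (A \ C).powerset, (-1:ℝ) ^ ((A \ C).card - S.card) := by
      refine Finset.sum_nbij' (i := fun B => B \ C) (j := fun S => S ∪ C) ?_ ?_ ?_ ?_ ?_
      · intro B hB
        simp only [mem_filter, mem_powerset] at hB
        exact mem_powerset.2 (sdiff_subset_sdiff hB.2.2 le_rfl)
      · intro S hS
        simp only [mem_powerset] at hS
        simp only [mem_filter, mem_powerset]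
        refine ⟨subset_univ _, subset_union_right, union_subset (hS.trans sdiff_subset) hCA⟩
      · intro B hB
        simp only [mem_filter, mem_powerset] at hB
        exact sdiff_union_of_subset hB.2.1
      · intro S hS
        simp only [mem_powerset] at hS
        have hd : Disjoint S C := (sdiff_disjoint (s := C) (t := A)).mono_left hS
        show (S ∪ C) \ C = S
        rw [union_sdiff_right, sdiff_eq_self_of_disjoint hd]
      · intro B hB
        simp only [mem_filter, mem_powerset] at hB
        congr 1
        have h1 := card_le_card hB.2.1
        have h2 := card_le_card hB.2.2
        have h3 := card_le_card hCA
        rw [card_sdiff_of_subset hB.2.1, card_sdiff_of_subset hCA]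
        omega
    rw [h1, aux_base]
    have : A \ C = ∅ ↔ A = C := by
      rw [sdiff_eq_empty_iff_subset]
      constructor
      · intro h; exact le_antisymm h hCA
      · intro h; exact h.le
    split_ifs with hh1 hh2 hh2 <;> simp_all
  · rw [Finset.sum_eq_zero, if_neg]
    · intro hAC; exact hCA (hAC ▸ le_rfl)
    · intro B hB
      simp only [mem_filter, mem_powerset] at hB
      exact absurd (hB.2.1.trans hB.2.2) hCA

private lemma aux_mobius {E : Type*} [Fintype E] [DecidableEq E]
    (P : Finset E → Prop) [DecidablePred P] (C : Finset E) :
    ∑ B ∈ (univ : Finset E).powerset,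
      (∑ A ∈ (univ : Finset E).powerset.filter (fun A => B ⊆ A ∧ ¬ P A),
        (-1:ℝ) ^ (A.card - B.card)) * (if C ⊆ B then 1 else 0)
    = if P C then 0 else 1 := by
  have step1 : ∀ B : Finset E,
      (∑ A ∈ (univ : Finset E).powerset.filter (fun A => B ⊆ A ∧ ¬ P A),
        (-1:ℝ) ^ (A.card - B.card)) * (if C ⊆ B then 1 else 0)
      = ∑ A ∈ (univ : Finset E).powerset,
          (if C ⊆ B ∧ B ⊆ A ∧ ¬ P A then (-1:ℝ) ^ (A.card - B.card) else 0) := by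
    intro B
    rw [Finset.sum_filter, Finset.sum_mul]
    refine Finset.sum_congr rfl fun A _ => ?_
    split_ifs with h1 h2 h2 <;> simp_all
  simp only [step1]
  rw [Finset.sum_comm]
  have step2 : ∀ A : Finset E,
      (∑ B ∈ (univ : Finset E).powerset,
        (if C ⊆ B ∧ B ⊆ A ∧ ¬ P A then (-1:ℝ) ^ (A.card - B.card) else 0))
      = if ¬ P A then (if A = C then 1 else 0) else 0 := by
    intro A
    by_cases hA : P A
    · rw [if_neg (by simpa using hA)]
      exact Finset.sum_eq_zero fun B _ => by simp [hA]
    · rw [if_pos hA, ← aux_ie2 C A, Finset.sum_filter]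
      refine Finset.sum_congr rfl fun B _ => ?_
      split_ifs <;> simp_all
  simp only [step2]
  rw [Finset.sum_eq_single C]
  · split_ifs <;> simp_all
  · intro A _ hAC
    split_ifs <;> simp_all
  · intro h
    exact absurd (mem_powerset.2 (subset_univ C)) h

theorem stmt9 {E : Type*} [Fintype E] [DecidableEq E] [Nonempty E]
    (t : E → ℝ) (ht : Function.Injective t) (htpos : ∀ e, 0 < t e)
    (P : Finset E → Prop) [DecidablePred P]
    (hPuniv : P Finset.univ) (hPempty : ¬ P (∅ : Finset E))
    (hPmono : ∀ A A' : Finset E, A ⊆ A' → P A → P A') :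
    sInf (Set.range t ∩ {s : ℝ | P (Finset.univ.filter fun e => t e ≤ s)}) =
      ∑ B ∈ (Finset.univ : Finset E).powerset,
        (∑ A ∈ (Finset.univ : Finset E).powerset.filter
            (fun A => B ⊆ A ∧ ¬ P A), (-1 : ℝ) ^ (A.card - B.card)) *
          sInf (t '' {e | e ∉ B}) := by
  letI : LinearOrder E := LinearOrder.lift' t ht
  have hle : ∀ a b : E, a ≤ b ↔ t a ≤ t b := fun a b => Iff.rfl
  have hlt : ∀ a b : E, a < b ↔ t a < t b := fun a b => by
    rw [lt_iff_not_ge, hle, ← lt_iff_not_ge]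
  set n := Fintype.card E with hn
  have hnpos : 0 < n := Fintype.card_pos
  let φ : Fin n ≃o E := monoEquivOfFin E hn.symm
  -- prefix sets and sorted times
  set pre : ℕ → Finset E := fun j => univ.filter (fun e => (φ.symm e : ℕ) < j) with hpre
  set τ : ℕ → ℝ := fun k => if hk : 0 < k ∧ k ≤ n then t (φ ⟨k-1, by omega⟩) else 0 with hτdef
  have hmempre : ∀ (e : E) (j : ℕ), e ∈ pre j ↔ (φ.symm e : ℕ) < j := by
    intro e j; simp [hpre]
  have hpre0 : pre 0 = ∅ := by ext e; simp [hmempre]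
  have hpren : pre n = univ := by ext e; simp [hmempre, (φ.symm e).isLt]
  have hpremono : ∀ {j j' : ℕ}, j ≤ j' → pre j ⊆ pre j' := by
    intro j j' hj e he
    rw [hmempre] at he ⊢; omega
  have hτ0 : τ 0 = 0 := by simp [hτdef]
  have hτs : ∀ (k : ℕ) (hk : k < n), τ (k+1) = t (φ ⟨k, hk⟩) := by
    intro k hk
    simp only [hτdef]
    rw [dif_pos ⟨Nat.succ_pos k, hk⟩]
    simp
  -- filter identity
  have hfilt : ∀ (k : ℕ) (hk : k < n),
      (univ.filter fun e => t e ≤ t (φ ⟨k, hk⟩)) = pre (k+1) := by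
    intro k hk
    ext e
    rw [mem_filter, hmempre]
    constructor
    · rintro ⟨-, h⟩
      have h1 : e ≤ φ ⟨k, hk⟩ := (hle _ _).2 h
      have h2 : φ.symm e ≤ φ.symm (φ ⟨k, hk⟩) := φ.symm.monotone h1
      rw [OrderIso.symm_apply_apply] at h2
      have h3 : (φ.symm e : ℕ) ≤ k := h2
      omega
    · intro h
      refine ⟨mem_univ e, ?_⟩
      have h1 : φ.symm e ≤ ⟨k, hk⟩ := by
        show (φ.symm e : ℕ) ≤ k
        omega
      have := φ.monotone h1
      rw [OrderIso.apply_symm_apply] at this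
      exact (hle _ _).1 this
  -- helper: indicator sums
  have hindsum : ∀ (c : ℕ → ℝ) (m : ℕ), m ≤ n →
      ∑ k ∈ range n, c k * (if k < m then (1:ℝ) else 0) = ∑ k ∈ range m, c k := by
    intro c m hm
    have h1 : ∀ k, c k * (if k < m then (1:ℝ) else 0) = if k < m then c k else 0 := by
      intro k; split_ifs <;> ring
    simp only [h1]
    rw [← Finset.sum_filter]
    congr 1
    ext k
    simp only [mem_filter, mem_range]
    omega
  -- the existence of K
  have hex : ∃ k, P (pre k) := ⟨n, by rw [hpren]; exact hPuniv⟩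
  set K := Nat.find hex with hKdef
  have hKP : P (pre K) := Nat.find_spec hex
  have hKpos : 0 < K := by
    rcases Nat.eq_zero_or_pos K with h | h
    · exact absurd (h ▸ hKP) (by rw [hpre0]; exact hPempty)
    · exact h
  have hKn : K ≤ n := Nat.find_min' hex (by rw [hpren]; exact hPuniv)
  have hPiff : ∀ k, P (pre k) ↔ K ≤ k := by
    intro k
    constructor
    · intro h; exact Nat.find_min' hex h
    · intro h; exact hPmono _ _ (hpremono h) hKP
  -- Step B1 : termwise rewrite of RHS
  have hB1 : ∀ B ∈ (univ : Finset E).powerset,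
      (∑ A ∈ (univ : Finset E).powerset.filter
          (fun A => B ⊆ A ∧ ¬ P A), (-1 : ℝ) ^ (A.card - B.card)) *
        sInf (t '' {e | e ∉ B})
      = (∑ A ∈ (univ : Finset E).powerset.filter
          (fun A => B ⊆ A ∧ ¬ P A), (-1 : ℝ) ^ (A.card - B.card)) *
        (∑ k ∈ range n, (τ (k+1) - τ k) * (if pre k ⊆ B then (1:ℝ) else 0)) := by
    intro B _
    by_cases hB : B = univ
    · subst hB
      have : (univ : Finset E).powerset.filter (fun A => univ ⊆ A ∧ ¬ P A) = ∅ := by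
        rw [Finset.filter_eq_empty_iff]
        intro A hA
        rintro ⟨h1, h2⟩
        have hAu : A = univ := le_antisymm (mem_powerset.1 hA) h1
        exact h2 (by rw [hAu]; exact hPuniv)
      rw [this]
      simp
    · congr 1
      -- B ≠ univ : compute both sides as t e0
      have hne : (univ \ B).Nonempty := by
        rw [sdiff_nonempty]
        intro h
        exact hB (le_antisymm (subset_univ B) h)
      set e0 := (univ \ B).min' hne with he0
      have he0mem : e0 ∈ univ \ B := min'_mem _ hne
      have he0nB : e0 ∉ B := (mem_sdiff.1 he0mem).2
      have hsInf : sInf (t '' {e | e ∉ B}) = t e0 := by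
        apply le_antisymm
        · exact csInf_le ((Set.toFinite _).image t).bddBelow ⟨e0, he0nB, rfl⟩
        · refine le_csInf ⟨t e0, ⟨e0, he0nB, rfl⟩⟩ ?_
          rintro x ⟨e, he, rfl⟩
          have : e0 ≤ e := min'_le _ _ (mem_sdiff.2 ⟨mem_univ e, he⟩)
          exact (hle _ _).1 this
      set j0 : Fin n := φ.symm e0 with hj0
      have hind : ∀ k ∈ range n, (if pre k ⊆ B then (1:ℝ) else 0)
          = if k < (j0:ℕ) + 1 then (1:ℝ) else 0 := by
        intro k hk
        congr 1
        rw [eq_iff_iff, Nat.lt_succ_iff]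
        constructor
        · intro hsub
          by_contra hlt
          push_neg at hlt
          have : e0 ∈ pre k := by rw [hmempre, ← hj0]; omega
          exact he0nB (hsub this)
        · intro hkj e he
          rw [hmempre] at he
          have hlt2 : φ.symm e < j0 := by
            rw [Fin.lt_iff_val_lt_val]; omega
          have : e < e0 := by
            have := φ.strictMono hlt2
            simpa [hj0] using this
          by_contra henB
          exact absurd (min'_le _ _ (mem_sdiff.2 ⟨mem_univ e, henB⟩)) (not_le.2 this)
      rw [Finset.sum_congr rfl (fun k hk => by rw [hind k hk]),
        hindsum _ ((j0:ℕ)+1) j0.isLt, Finset.sum_range_sub, hτ0, sub_zero,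
        hτs _ j0.isLt, hsInf]
      congr 1
      rw [Fin.eta, hj0]
      exact (φ.apply_symm_apply e0).symm
  rw [Finset.sum_congr rfl hB1]
  -- Step B2 : swap sums and apply Mobius
  have hB2 : ∑ B ∈ (univ : Finset E).powerset,
      (∑ A ∈ (univ : Finset E).powerset.filter
          (fun A => B ⊆ A ∧ ¬ P A), (-1 : ℝ) ^ (A.card - B.card)) *
        (∑ k ∈ range n, (τ (k+1) - τ k) * (if pre k ⊆ B then (1:ℝ) else 0))
      = ∑ k ∈ range n, (τ (k+1) - τ k) * (if P (pre k) then (0:ℝ) else 1) := by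
    simp only [Finset.mul_sum]
    rw [Finset.sum_comm]
    refine Finset.sum_congr rfl fun k _ => ?_
    rw [← aux_mobius P (pre k), Finset.mul_sum]
    refine Finset.sum_congr rfl fun B _ => ?_
    ring
  rw [hB2]
  -- Step C : telescoping
  have hC : ∑ k ∈ range n, (τ (k+1) - τ k) * (if P (pre k) then (0:ℝ) else 1) = τ K := by
    have : ∀ k, (if P (pre k) then (0:ℝ) else 1) = if k < K then (1:ℝ) else 0 := by
      intro k
      rcases Nat.lt_or_ge k K with h | h
      · rw [if_neg (by rw [hPiff]; omega), if_pos h]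
      · rw [if_pos ((hPiff k).2 h), if_neg (by omega)]
    simp only [this]
    rw [hindsum _ K hKn, Finset.sum_range_sub, hτ0, sub_zero]
  rw [hC]
  -- Step D : LHS = τ K
  have hKpred : K - 1 < n := by omega
  have hτK : τ K = t (φ ⟨K-1, hKpred⟩) := by
    have h1 : τ ((K-1)+1) = t (φ ⟨K-1, hKpred⟩) := hτs _ hKpred
    rw [← h1]
    congr 1
    omega
  have hmem : τ K ∈ Set.range t ∩ {s : ℝ | P (Finset.univ.filter fun e => t e ≤ s)} := by
    constructor
    · exact ⟨φ ⟨K-1, hKpred⟩, hτK.symm⟩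
    · show P _
      rw [hτK, hfilt _ hKpred]
      have : K - 1 + 1 = K := by omega
      rw [this]
      exact hKP
  apply le_antisymm
  · exact csInf_le ((Set.finite_range t).inter_of_left _).bddBelow hmem
  · apply le_csInf ⟨τ K, hmem⟩
    rintro x ⟨⟨e, rfl⟩, hx⟩
    have hx' : P (univ.filter fun e' => t e' ≤ t e) := hx
    have he : e = φ (φ.symm e) := (φ.apply_symm_apply e).symm
    have hx'' : P (pre ((φ.symm e : ℕ) + 1)) := by
      rw [← hfilt _ (φ.symm e).isLt]
      have h2 : φ ⟨↑(φ.symm e), (φ.symm e).isLt⟩ = e := by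
        rw [Fin.eta, OrderIso.apply_symm_apply]
      rw [h2]
      exact hx'
    have hKle : K ≤ (φ.symm e : ℕ) + 1 := Nat.find_min' hex hx''
    have : φ ⟨K-1, hKpred⟩ ≤ e := by
      rw [he]
      apply φ.monotone
      show (K - 1 : ℕ) ≤ (φ.symm e : ℕ)
      omega
    rw [hτK]
    exact (hle _ _).1 this
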